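/- The number of edges of the Fibonacci cube Γ_n equals Σ_{i=1}^{n} F_i * F_{n-i+1}, where F is the Fibonacci sequence with F_1 = F_2 = 1. -/

import Mathlib

/-- Independent subsets of the h-th power of the path on n vertices:
subsets of {1,...,n} with all pairwise differences of distinct elements greater than h. -/
def pathSubsets (n h : ℕ) : Finset (Finset ℕ) :=
  (Finset.Icc 1 n).powerset.filter (fun S => ∀ i ∈ S, ∀ j ∈ S, i < j → i + h < j)

def pathCount (n h k : ℕ) : ℕ := ((pathSubsets n h).filter (fun S => S.card = k)).card

def pathTotal (n h : ℕ) : ℕ := (pathSubsets n h).card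

/-- Independent subsets of the h-th power of the cycle on n vertices:
subsets S of {1,...,n} with h < |i-j| < n-h for all distinct i,j ∈ S. -/
def cycleSubsets (n h : ℕ) : Finset (Finset ℕ) :=
  (Finset.Icc 1 n).powerset.filter
    (fun S => ∀ i ∈ S, ∀ j ∈ S, i < j → i + h < j ∧ j + h < n + i)

def cycleCount (n h k : ℕ) : ℕ := ((cycleSubsets n h).filter (fun S => S.card = k)).card

def cycleTotal (n h : ℕ) : ℕ := (cycleSubsets n h).card

/-- Number of edges of the Hasse diagram of independent subsets of Pₙ⁽ʰ⁾ ordered by inclusion. -/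
def pathEdges (n h : ℕ) : ℕ :=
  (((pathSubsets n h) ×ˢ (pathSubsets n h)).filter
    (fun p => p.1 ⊆ p.2 ∧ p.2.card = p.1.card + 1)).card

/-- Number of edges of the Hasse diagram of independent subsets of Cₙ⁽ʰ⁾ ordered by inclusion. -/
def cycleEdges (n h : ℕ) : ℕ :=
  (((cycleSubsets n h) ×ˢ (cycleSubsets n h)).filter
    (fun p => p.1 ⊆ p.2 ∧ p.2.card = p.1.card + 1)).card

open Finset

lemma mem_pathSubsets {n : ℕ} {S : Finset ℕ} :
    S ∈ pathSubsets n 1 ↔ S ⊆ Finset.Icc 1 n ∧ ∀ i ∈ S, ∀ j ∈ S, i < j → i + 1 < j := by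
  simp [pathSubsets]

lemma le_of_mem_path {n : ℕ} {S : Finset ℕ} (h : S ∈ pathSubsets n 1) {x : ℕ} (hx : x ∈ S) :
    1 ≤ x ∧ x ≤ n := by
  have := (mem_pathSubsets.1 h).1 hx
  simpa using this

lemma not_mem_of_gt {n : ℕ} {S : Finset ℕ} (h : S ∈ pathSubsets n 1) {x : ℕ} (hx : n < x) :
    x ∉ S := fun hm => by have := (le_of_mem_path h hm).2; omega

lemma path_mono {n : ℕ} : pathSubsets n 1 ⊆ pathSubsets (n+1) 1 := by
  intro S hS
  rw [mem_pathSubsets] at hS ⊢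
  refine ⟨hS.1.trans ?_, hS.2⟩
  exact Finset.Icc_subset_Icc_right (by omega)

lemma erase_mem_path {n : ℕ} {S : Finset ℕ} (h : S ∈ pathSubsets (n+2) 1) (hm : n + 2 ∈ S) :
    S.erase (n+2) ∈ pathSubsets n 1 := by
  rw [mem_pathSubsets] at h ⊢
  constructor
  · intro x hx
    have hx' := Finset.mem_of_mem_erase hx
    have h1 := h.1 hx'
    simp only [Finset.mem_Icc] at h1 ⊢
    have hne : x ≠ n + 2 := Finset.ne_of_mem_erase hx
    have hne2 : x ≠ n + 1 := by
      intro he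
      subst he
      have := h.2 _ hx' _ hm (by omega)
      omega
    omega
  · intro i hi j hj hij
    exact h.2 _ (Finset.mem_of_mem_erase hi) _ (Finset.mem_of_mem_erase hj) hij

lemma insert_mem_path {n : ℕ} {S : Finset ℕ} (h : S ∈ pathSubsets n 1) :
    insert (n+2) S ∈ pathSubsets (n+2) 1 := by
  rw [mem_pathSubsets] at h ⊢
  constructor
  · intro x hx
    rcases Finset.mem_insert.1 hx with rfl | hx
    · simp
    · have := h.1 hx; simp only [Finset.mem_Icc] at this ⊢; omega
  · intro i hi j hj hij
    rcases Finset.mem_insert.1 hi with rfl | hi <;> rcases Finset.mem_insert.1 hj with rfl | hj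
    · omega
    · have := (h.1 hj); simp only [Finset.mem_Icc] at this; omega
    · have := (h.1 hi); simp only [Finset.mem_Icc] at this; omega
    · exact h.2 _ hi _ hj hij

lemma not_top_mem_path {n : ℕ} {S : Finset ℕ} (h : S ∈ pathSubsets (n+2) 1) (hm : n + 2 ∉ S) :
    S ∈ pathSubsets (n+1) 1 := by
  rw [mem_pathSubsets] at h ⊢
  refine ⟨?_, h.2⟩
  intro x hx
  have := h.1 hx
  simp only [Finset.mem_Icc] at this ⊢
  have : x ≠ n + 2 := fun he => hm (he ▸ hx)
  have := h.1 hx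
  simp only [Finset.mem_Icc] at this
  omega

lemma total_rec (n : ℕ) : pathTotal (n+2) 1 = pathTotal (n+1) 1 + pathTotal n 1 := by
  unfold pathTotal
  rw [← Finset.card_filter_add_card_filter_not (p := fun S => (n+2) ∉ S)]
  congr 1
  · congr 1
    ext S
    simp only [Finset.mem_filter]
    constructor
    · rintro ⟨h1, h2⟩; exact not_top_mem_path h1 h2
    · intro h
      exact ⟨path_mono h, not_mem_of_gt h (by omega)⟩
  · refine Finset.card_bij' (fun S _ => S.erase (n+2)) (fun S _ => insert (n+2) S)
      ?_ ?_ ?_ ?_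
    · intro S hS
      simp only [Finset.mem_filter, not_not] at hS
      exact erase_mem_path hS.1 hS.2
    · intro S hS
      simp only [Finset.mem_filter, not_not]
      exact ⟨insert_mem_path hS, Finset.mem_insert_self _ _⟩
    · intro S hS
      simp only [Finset.mem_filter, not_not] at hS
      exact Finset.insert_erase hS.2
    · intro S hS
      exact Finset.erase_insert (not_mem_of_gt hS (by omega))

def EdgSet (n : ℕ) : Finset (Finset ℕ × Finset ℕ) :=
  ((pathSubsets n 1) ×ˢ (pathSubsets n 1)).filter
    (fun p => p.1 ⊆ p.2 ∧ p.2.card = p.1.card + 1)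

lemma pathEdges_eq (n : ℕ) : pathEdges n 1 = (EdgSet n).card := rfl

lemma mem_EdgSet {n : ℕ} {p : Finset ℕ × Finset ℕ} :
    p ∈ EdgSet n ↔ p.1 ∈ pathSubsets n 1 ∧ p.2 ∈ pathSubsets n 1 ∧ p.1 ⊆ p.2 ∧
      p.2.card = p.1.card + 1 := by
  simp [EdgSet, Finset.mem_filter, Finset.mem_product, and_assoc]

lemma fst_mem_path {n : ℕ} {S T : Finset ℕ} (hT : T ∈ pathSubsets (n+2) 1)
    (hS : S ∈ pathSubsets (n+2) 1) (hsub : S ⊆ T) (h2 : n+2 ∈ T) (h1 : n+2 ∉ S) :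
    S ∈ pathSubsets n 1 := by
  rw [mem_pathSubsets] at hT hS ⊢
  refine ⟨?_, hS.2⟩
  intro x hx
  have hle := hS.1 hx
  simp only [Finset.mem_Icc] at hle ⊢
  have hne : x ≠ n + 2 := fun he => h1 (he ▸ hx)
  have hne2 : x ≠ n + 1 := by
    intro he
    subst he
    have := hT.2 _ (hsub hx) _ h2 (by omega)
    omega
  omega

lemma edges_rec (n : ℕ) :
    pathEdges (n+2) 1 = pathEdges (n+1) 1 + pathEdges n 1 + pathTotal n 1 := by
  have h1 : (EdgSet (n+2)).filter (fun p => ¬ (n+2) ∈ p.2) = EdgSet (n+1) := by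
    ext p
    simp only [Finset.mem_filter, mem_EdgSet]
    constructor
    · rintro ⟨⟨hS, hT, hsub, hcard⟩, hnm⟩
      have hT' := not_top_mem_path hT hnm
      have hS' := not_top_mem_path hS (fun h => hnm (hsub h))
      exact ⟨hS', hT', hsub, hcard⟩
    · rintro ⟨hS, hT, hsub, hcard⟩
      exact ⟨⟨path_mono hS, path_mono hT, hsub, hcard⟩,
        not_mem_of_gt hT (by omega)⟩
  have h2 : ((EdgSet (n+2)).filter (fun p => (n+2) ∈ p.2 ∧ (n+2) ∈ p.1)).card
      = (EdgSet n).card := by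
    refine Finset.card_bij' (fun p _ => (p.1.erase (n+2), p.2.erase (n+2)))
      (fun p _ => (insert (n+2) p.1, insert (n+2) p.2)) ?_ ?_ ?_ ?_
    · rintro p hp
      simp only [Finset.mem_filter, mem_EdgSet] at hp
      obtain ⟨⟨hS, hT, hsub, hcard⟩, hmT, hmS⟩ := hp
      rw [mem_EdgSet]
      refine ⟨erase_mem_path hS hmS, erase_mem_path hT hmT,
        Finset.erase_subset_erase _ hsub, ?_⟩
      have c1 := Finset.card_erase_of_mem hmS
      have c2 := Finset.card_erase_of_mem hmT
      have : 1 ≤ p.1.card := Finset.card_pos.2 ⟨_, hmS⟩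
      simp only [c1, c2]
      omega
    · rintro p hp
      rw [mem_EdgSet] at hp
      obtain ⟨hS, hT, hsub, hcard⟩ := hp
      simp only [Finset.mem_filter, mem_EdgSet]
      refine ⟨⟨insert_mem_path hS, insert_mem_path hT,
        Finset.insert_subset_insert _ hsub, ?_⟩,
        Finset.mem_insert_self _ _, Finset.mem_insert_self _ _⟩
      rw [Finset.card_insert_of_notMem (not_mem_of_gt hS (by omega)),
        Finset.card_insert_of_notMem (not_mem_of_gt hT (by omega))]
      omega
    · rintro p hp
      simp only [Finset.mem_filter, mem_EdgSet] at hp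
      obtain ⟨_, hmT, hmS⟩ := hp
      simp [Finset.insert_erase hmS, Finset.insert_erase hmT]
    · rintro p hp
      rw [mem_EdgSet] at hp
      obtain ⟨hS, hT, _, _⟩ := hp
      simp [Finset.erase_insert (not_mem_of_gt (x := n+2) hS (by omega)),
        Finset.erase_insert (not_mem_of_gt (x := n+2) hT (by omega))]
  have h3 : ((EdgSet (n+2)).filter (fun p => (n+2) ∈ p.2 ∧ ¬ (n+2) ∈ p.1)).card
      = (pathSubsets n 1).card := by
    refine Finset.card_bij' (fun p _ => p.1) (fun S _ => (S, insert (n+2) S)) ?_ ?_ ?_ ?_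
    · rintro p hp
      simp only [Finset.mem_filter, mem_EdgSet] at hp
      obtain ⟨⟨hS, hT, hsub, hcard⟩, hmT, hmS⟩ := hp
      exact fst_mem_path hT hS hsub hmT hmS
    · rintro S hS
      simp only [Finset.mem_filter, mem_EdgSet]
      have hS2 : S ∈ pathSubsets (n+2) 1 := path_mono (path_mono hS)
      refine ⟨⟨hS2, insert_mem_path hS, Finset.subset_insert _ _, ?_⟩,
        Finset.mem_insert_self _ _, not_mem_of_gt hS (by omega)⟩
      rw [Finset.card_insert_of_notMem (not_mem_of_gt hS (by omega))]
    · rintro p hp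
      simp only [Finset.mem_filter, mem_EdgSet] at hp
      obtain ⟨⟨hS, hT, hsub, hcard⟩, hmT, hmS⟩ := hp
      have hsub' : insert (n+2) p.1 ⊆ p.2 := Finset.insert_subset hmT hsub
      have hc : p.2.card ≤ (insert (n+2) p.1).card := by
        rw [Finset.card_insert_of_notMem hmS]; omega
      have := Finset.eq_of_subset_of_card_le hsub' hc
      exact Prod.ext rfl this
    · rintro S hS
      rfl
  have split1 := Finset.card_filter_add_card_filter_not
    (s := EdgSet (n+2)) (p := fun p => (n+2) ∈ p.2)
  have split2 := Finset.card_filter_add_card_filter_not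
    (s := (EdgSet (n+2)).filter (fun p => (n+2) ∈ p.2)) (p := fun p => (n+2) ∈ p.1)
  rw [Finset.filter_filter, Finset.filter_filter] at split2
  rw [pathEdges_eq (n+2), pathEdges_eq (n+1), pathEdges_eq n, ← split1, ← h1]
  unfold pathTotal
  omega

lemma twoStep {P : ℕ → Prop} (h0 : P 0) (h1 : P 1)
    (h : ∀ n, P n → P (n+1) → P (n+2)) : ∀ n, P n := by
  intro n
  induction n using Nat.strong_induction_on with
  | _ n ih =>
    match n with
    | 0 => exact h0
    | 1 => exact h1
    | n+2 => exact h n (ih n (by omega)) (ih (n+1) (by omega))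

lemma total_eq_fib : ∀ n, pathTotal n 1 = Nat.fib (n+2) := by
  refine twoStep (by decide) (by decide) ?_
  intro n ih1 ih2
  rw [total_rec, ih1, ih2]
  rw [show Nat.fib (n+2+2) = Nat.fib (n+2) + Nat.fib (n+2+1) from Nat.fib_add_two (n := n+2)]
  rw [show n+2+1 = n+1+2 from by omega]
  omega

def G (n : ℕ) : ℕ := ∑ i ∈ Finset.range n, Nat.fib (i+1) * Nat.fib (n - i)

lemma G_rec (n : ℕ) : G (n+2) = G (n+1) + G n + Nat.fib (n+2) := by
  unfold G
  rw [Finset.sum_range_succ]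
  have e1 : ∀ i ∈ Finset.range (n+1),
      Nat.fib (i+1) * Nat.fib (n+2-i) =
      Nat.fib (i+1) * Nat.fib (n+1-i) + Nat.fib (i+1) * Nat.fib (n-i) := by
    intro i hi
    rw [Finset.mem_range] at hi
    have h2 : n + 2 - i = (n - i) + 2 := by omega
    have h1 : n + 1 - i = (n - i) + 1 := by omega
    rw [h2, h1, Nat.fib_add_two, Nat.mul_add]
    ring
  rw [Finset.sum_congr rfl e1, Finset.sum_add_distrib, Finset.sum_range_succ
    (f := fun i => Nat.fib (i+1) * Nat.fib (n - i))]
  have hz : n - n = 0 := by omega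
  have ho : n + 2 - (n+1) = 1 := by omega
  rw [hz, ho]
  simp [Nat.fib_zero, Nat.fib_one]

lemma edges_eq_G : ∀ n, pathEdges n 1 = G n := by
  refine twoStep (by decide) (by decide) ?_
  intro n ih1 ih2
  rw [edges_rec, ih1, ih2, total_eq_fib, G_rec]

theorem stmt12 (n : ℕ) (F : ℕ → ℕ) (hF1 : F 1 = 1) (hF2 : F 2 = 1)
    (hFrec : ∀ i, 2 < i → F i = F (i - 1) + F (i - 2)) :
    pathEdges n 1 = ∑ i ∈ Finset.Icc 1 n, F i * F (n - i + 1) := by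
  have hfib : ∀ i, F (i+1) = Nat.fib (i+1) := by
    intro i
    induction i using Nat.strong_induction_on with
    | _ i ih =>
      match i with
      | 0 => simpa using hF1
      | 1 => simpa using hF2
      | k+2 =>
        rw [hFrec (k+3) (by omega)]
        have : k + 3 - 1 = k + 2 := by omega
        rw [this]
        have : k + 3 - 2 = k + 1 := by omega
        rw [this, ih k (by omega), ih (k+1) (by omega)]
        rw [show Nat.fib (k+2+1) = Nat.fib (k+1) + Nat.fib (k+1+1) from Nat.fib_add_two (n := k+1)]
        rw [show k+1+1 = k+2 from by omega]
        omega
  have hsum : ∑ i ∈ Finset.Icc 1 n, F i * F (n - i + 1)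
      = ∑ i ∈ Finset.Icc 1 n, Nat.fib i * Nat.fib (n - i + 1) := by
    refine Finset.sum_congr rfl ?_
    intro i hi
    rw [Finset.mem_Icc] at hi
    obtain ⟨h1, h2⟩ := hi
    obtain ⟨j, rfl⟩ : ∃ j, i = j + 1 := ⟨i - 1, by omega⟩
    obtain ⟨m, hm⟩ : ∃ m, n - (j+1) + 1 = m + 1 := ⟨n - (j+1), rfl⟩
    rw [hm, hfib j, hfib m]
  rw [hsum, edges_eq_G]
  unfold G
  have : Finset.Icc 1 n = Finset.Ico 1 (n+1) := by
    ext x; simp [Finset.mem_Icc, Finset.mem_Ico]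
  rw [this, Finset.sum_Ico_eq_sum_range]
  simp only [Nat.add_sub_cancel]
  refine Finset.sum_congr rfl ?_
  intro i hi
  rw [Finset.mem_range] at hi
  have h1 : 1 + i = i + 1 := by omega
  have h2 : n - (1 + i) + 1 = n - i := by omega
  rw [h2, h1]
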